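/- Let H be a Hilbert space and D : dom(D) → H a closed symmetric operator with adjoint D*. Equip the quotient space dom(D*)/dom(D) with the symplectic form ω([x],[y]) = ⟨D*x, y⟩ - ⟨x, D*y⟩ (well defined on the quotient). Then a subspace L ⊆ dom(D*)/dom(D) is Lagrangian for ω (i.e., equal to its ω-annihilator) if and only if the restriction of D* to the preimage of L in dom(D*) is a self-adjoint extension of D. -/

import Mathlib

/-- von Neumann's correspondence.  Let `D` be a densely defined closed
symmetric operator on a Hilbert space `H`, with adjoint `D*`.  Equip
`dom(D*)/dom(D)` with the symplectic form `ω([x],[y]) = ⟨D*x, y⟩ - ⟨x, D*y⟩`.  A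
subspace `L ⊆ dom(D*)/dom(D)` (realized here through its preimage `W` in `dom(D*)`,
a subspace with `dom D ≤ W ≤ dom D*`) is Lagrangian for `ω` (i.e. equal to its
`ω`-annihilator) if and only if the restriction of `D*` to `W` is a self-adjoint
extension of `D`. -/
theorem stmt_14 {H : Type*} [NormedAddCommGroup H] [InnerProductSpace ℂ H]
    [CompleteSpace H]
    (D : H →ₗ.[ℂ] H) (hdense : Dense (D.domain : Set H))
    (hclosed : IsClosed (D.graph : Set (H × H)))
    (hsym : ∀ x y : D.domain, (inner ℂ (D x) (y : H) : ℂ) = inner ℂ (x : H) (D y))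
    (W : Submodule ℂ H) (hDW : D.domain ≤ W) (hWD : W ≤ D.adjoint.domain) :
    ((∀ x y : D.adjoint.domain, (x : H) ∈ W → (y : H) ∈ W →
        (inner ℂ (D.adjoint x) (y : H) : ℂ) - inner ℂ (x : H) (D.adjoint y) = 0) ∧
      (∀ x : D.adjoint.domain,
        (∀ y : D.adjoint.domain, (y : H) ∈ W →
          (inner ℂ (D.adjoint x) (y : H) : ℂ) - inner ℂ (x : H) (D.adjoint y) = 0) →
        (x : H) ∈ W))
    ↔ (D.adjoint.domRestrict W).adjoint = D.adjoint.domRestrict W := by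
  classical
  set T := D.adjoint with hTdef
  set E := T.domRestrict W with hEdef
  have hsym' : D.IsFormalAdjoint D := hsym
  have hDT : D ≤ T := LinearPMap.IsFormalAdjoint.le_adjoint hdense hsym'
  have hdomE : E.domain = W ⊓ T.domain := rfl
  have hDE : D.domain ≤ E.domain := fun x hx =>
    Submodule.mem_inf.mpr ⟨hDW hx, hDT.1 hx⟩
  have hEdense : Dense (E.domain : Set H) := hdense.mono hDE
  -- value transfer lemma
  have hEval : ∀ (x : E.domain) (hx : (x : H) ∈ T.domain), E x = T ⟨x, hx⟩ :=
    fun x hx => LinearPMap.domRestrict_apply rfl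
  have hmemW : ∀ x : E.domain, (x : H) ∈ W := fun x => (Submodule.mem_inf.mp x.2).1
  have hmemT : ∀ x : E.domain, (x : H) ∈ T.domain := fun x => (Submodule.mem_inf.mp x.2).2
  have hDE' : D ≤ E := by
    refine ⟨hDE, fun x y hxy => ?_⟩
    rw [hEval y (hmemT y)]
    exact hDT.2 hxy
  constructor
  · rintro ⟨h1, h2⟩
    -- E is symmetric
    have hEsym : E.IsFormalAdjoint E := by
      intro x y
      rw [hEval x (hmemT x), hEval y (hmemT y)]
      have := h1 ⟨x, hmemT x⟩ ⟨y, hmemT y⟩ (hmemW x) (hmemW y)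
      exact sub_eq_zero.mp this
    have hEE' : E ≤ E.adjoint := LinearPMap.IsFormalAdjoint.le_adjoint hEdense hEsym
    -- E† ≤ T
    have hfa : D.IsFormalAdjoint E.adjoint := by
      intro x y
      have hx : (x : H) ∈ E.domain := hDE x.2
      have h1' : D x = E ⟨x, hx⟩ := hDE'.2 rfl
      have h2' := (LinearPMap.adjoint_isFormalAdjoint hEdense).symm ⟨(x : H), hx⟩ y
      rw [h1']
      exact h2'
    have hE'T : E.adjoint ≤ T := LinearPMap.IsFormalAdjoint.le_adjoint hdense hfa
    -- E† ≤ E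
    have hE'E : E.adjoint ≤ E := by
      have hdom : E.adjoint.domain ≤ E.domain := by
        intro x hx
        have hxT : x ∈ T.domain := hE'T.1 hx
        refine Submodule.mem_inf.mpr ⟨?_, hxT⟩
        refine h2 ⟨x, hxT⟩ fun y hyW => ?_
        have hyE : (y : H) ∈ E.domain := Submodule.mem_inf.mpr ⟨hyW, y.2⟩
        have e1 : E.adjoint ⟨x, hx⟩ = T ⟨x, hxT⟩ := hE'T.2 rfl
        have e2 := LinearPMap.adjoint_isFormalAdjoint hEdense ⟨x, hx⟩ ⟨(y : H), hyE⟩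
        rw [hEval ⟨(y : H), hyE⟩ y.2] at e2
        rw [← e1, e2, sub_self]
      refine ⟨hdom, fun x y hxy => ?_⟩
      have e1 : E.adjoint x = T ⟨(x : H), hE'T.1 x.2⟩ := hE'T.2 rfl
      have e2 : E y = T ⟨(y : H), hmemT y⟩ := hEval y (hmemT y)
      rw [e1, e2]
      congr 1
      exact Subtype.ext hxy
    exact le_antisymm hE'E hEE'
  · intro hEq
    have hadj := LinearPMap.adjoint_isFormalAdjoint hEdense
    rw [hEq] at hadj
    constructor
    · intro x y hxW hyW
      have hxE : (x : H) ∈ E.domain := Submodule.mem_inf.mpr ⟨hxW, x.2⟩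
      have hyE : (y : H) ∈ E.domain := Submodule.mem_inf.mpr ⟨hyW, y.2⟩
      have := hadj ⟨(x : H), hxE⟩ ⟨(y : H), hyE⟩
      rw [hEval ⟨(x : H), hxE⟩ x.2, hEval ⟨(y : H), hyE⟩ y.2] at this
      simp only [Submodule.coe_mk] at this
      rw [this, sub_self]
    · intro x hx
      have hmem : (x : H) ∈ E.adjoint.domain := by
        refine LinearPMap.mem_adjoint_domain_of_exists _ ⟨T x, fun y => ?_⟩
        have hyT : (y : H) ∈ T.domain := hmemT y
        have := hx ⟨(y : H), hyT⟩ (hmemW y)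
        rw [hEval y hyT]
        exact sub_eq_zero.mp this
      rw [hEq] at hmem
      exact (Submodule.mem_inf.mp hmem).1
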